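/- Let λ, μ, φ be differentiable real functions satisfying λ̇ = p₆ sin φ, μ̇ = p₆ cos φ, and φ̈ = λ sin φ + μ cos φ, where p₆ ≠ 0 is a constant. Then d/dt[φ̇ - (λ² + μ²)/(2p₆)] = 0, i.e., φ̇ = K + (λ² + μ²)/(2p₆) for some constant K. -/

import Mathlib

/-- If λ̇ = p₆ sin φ, μ̇ = p₆ cos φ and φ̈ = λ sin φ + μ cos φ
with p₆ ≠ 0 constant, then φ̇ - (λ² + μ²)/(2p₆) is constant, i.e.
φ̇ = K + (λ² + μ²)/(2p₆) for some constant K. -/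
theorem stmt4 (p₆ : ℝ) (hp₆ : p₆ ≠ 0) (lam mu φ : ℝ → ℝ)
    (hlam : ∀ t, HasDerivAt lam (p₆ * Real.sin (φ t)) t)
    (hmu : ∀ t, HasDerivAt mu (p₆ * Real.cos (φ t)) t)
    (hφ : Differentiable ℝ φ)
    (hφ2 : ∀ t, HasDerivAt (deriv φ) (lam t * Real.sin (φ t) + mu t * Real.cos (φ t)) t) :
    (∀ t, HasDerivAt (fun s => deriv φ s - ((lam s) ^ 2 + (mu s) ^ 2) / (2 * p₆)) 0 t) ∧
    ∃ K : ℝ, ∀ t, deriv φ t = K + ((lam t) ^ 2 + (mu t) ^ 2) / (2 * p₆) := by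
  have key : ∀ t, HasDerivAt (fun s => deriv φ s - ((lam s) ^ 2 + (mu s) ^ 2) / (2 * p₆)) 0 t := by
    intro t
    have h := ((hφ2 t).sub ((((hlam t).pow 2).add ((hmu t).pow 2)).div_const (2 * p₆)))
    refine h.congr_deriv ?_
    rw [sub_eq_zero, eq_div_iff (mul_ne_zero two_ne_zero hp₆)]
    push_cast
    ring
  refine ⟨key, ?_⟩
  have hconst : ∀ t, (fun s => deriv φ s - ((lam s) ^ 2 + (mu s) ^ 2) / (2 * p₆)) t
      = (fun s => deriv φ s - ((lam s) ^ 2 + (mu s) ^ 2) / (2 * p₆)) 0 := by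
    intro t
    exact is_const_of_deriv_eq_zero (fun s => (key s).differentiableAt) (fun s => (key s).deriv) t 0
  refine ⟨deriv φ 0 - ((lam 0) ^ 2 + (mu 0) ^ 2) / (2 * p₆), fun t => ?_⟩
  have := hconst t
  simp only at this
  linarith
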